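/- The exponential-utility generator satisfies the local Lipschitz condition in z of assumption (H₂): for all z¹, z² ∈ E, |F^α(z¹) − F^α(z²)| ≤ (α/2)‖m(z¹ − z²)‖ · ( ‖m z¹‖ + ‖m z²‖ + 2α⁻¹‖m λ‖ ) + ‖m(z¹ − z²)‖ · ‖m λ‖. -/
import Mathlib


open scoped RealInnerProductSpace

/-- The exponential-utility generator satisfies the local Lipschitz condition in `z`
of assumption (H₂). -/
theorem stmt_1 {d : ℕ}
    (m : EuclideanSpace ℝ (Fin d) →ₗ[ℝ] EuclideanSpace ℝ (Fin d))
    (C : Set (EuclideanSpace ℝ (Fin d))) (hCne : C.Nonempty) (hCcl : IsClosed C)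
    (h0C : (0 : EuclideanSpace ℝ (Fin d)) ∈ C)
    (lam : EuclideanSpace ℝ (Fin d)) (α : ℝ) (hα : 0 < α)
    (F : EuclideanSpace ℝ (Fin d) → ℝ)
    (hF : ∀ z, F z =
      sInf ((fun ν => α / 2 * ‖m (ν - (z + α⁻¹ • lam))‖ ^ 2) '' C)
        - ⟪m z, m lam⟫ - (2 * α)⁻¹ * ‖m lam‖ ^ 2) :
    ∀ z₁ z₂, |F z₁ - F z₂| ≤
      α / 2 * ‖m (z₁ - z₂)‖ * (‖m z₁‖ + ‖m z₂‖ + 2 * α⁻¹ * ‖m lam‖)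
        + ‖m (z₁ - z₂)‖ * ‖m lam‖ := by
  intro z₁ z₂
  set D : EuclideanSpace ℝ (Fin d) → ℝ :=
    fun w => sInf ((fun ν => ‖m (ν - w)‖) '' C) with hDdef
  have hne : ∀ w : EuclideanSpace ℝ (Fin d),
      ((fun ν => ‖m (ν - w)‖) '' C).Nonempty := fun w => hCne.image _
  have hbdd : ∀ w : EuclideanSpace ℝ (Fin d),
      BddBelow ((fun ν => ‖m (ν - w)‖) '' C) := by
    intro w
    refine ⟨0, ?_⟩
    rintro x ⟨ν, -, rfl⟩
    exact norm_nonneg _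
  have hD0 : ∀ w, 0 ≤ D w := by
    intro w
    apply Real.sInf_nonneg
    rintro x ⟨ν, -, rfl⟩
    exact norm_nonneg _
  have hDle : ∀ w ν, ν ∈ C → D w ≤ ‖m (ν - w)‖ := by
    intro w ν hν
    exact csInf_le (hbdd w) ⟨ν, hν, rfl⟩
  have hDw : ∀ w, D w ≤ ‖m w‖ := by
    intro w
    have := hDle w 0 h0C
    simpa using this
  -- Lipschitz property of D
  have hLip : ∀ wa wb, D wa ≤ D wb + ‖m (wa - wb)‖ := by
    intro wa wb
    have hlb : ∀ x ∈ ((fun ν => ‖m (ν - wb)‖) '' C), D wa - ‖m (wa - wb)‖ ≤ x := by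
      rintro x ⟨ν, hν, rfl⟩
      have h1 : D wa ≤ ‖m (ν - wa)‖ := hDle wa ν hν
      have h2 : ‖m (ν - wa)‖ ≤ ‖m (ν - wb)‖ + ‖m (wa - wb)‖ := by
        have he : m (ν - wa) = m (ν - wb) - m (wa - wb) := by
          simp only [map_sub]; abel
        rw [he]
        exact norm_sub_le _ _
      linarith
    have := le_csInf (hne wb) hlb
    linarith
  -- key formula for the inf of the quadratic
  have hc : (0 : ℝ) < α / 2 := by linarith
  have hkey : ∀ w : EuclideanSpace ℝ (Fin d),
      sInf ((fun ν => α / 2 * ‖m (ν - w)‖ ^ 2) '' C) = α / 2 * (D w) ^ 2 := by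
    intro w
    refine le_antisymm ?_ ?_
    · set S := sInf ((fun ν => α / 2 * ‖m (ν - w)‖ ^ 2) '' C) with hS
      have hS0 : 0 ≤ S := by
        apply Real.sInf_nonneg
        rintro x ⟨ν, -, rfl⟩
        positivity
      have hSle : ∀ ν ∈ C, S ≤ α / 2 * ‖m (ν - w)‖ ^ 2 := by
        intro ν hν
        refine csInf_le ⟨0, ?_⟩ ⟨ν, hν, rfl⟩
        rintro x ⟨μ, -, rfl⟩
        positivity
      have hsq : Real.sqrt (S / (α / 2)) ≤ D w := by
        apply le_csInf (hne w)
        rintro x ⟨ν, hν, rfl⟩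
        have h1 : S / (α / 2) ≤ ‖m (ν - w)‖ ^ 2 := by
          rw [div_le_iff₀ hc]
          nlinarith [hSle ν hν]
        calc Real.sqrt (S / (α / 2)) ≤ Real.sqrt (‖m (ν - w)‖ ^ 2) :=
              Real.sqrt_le_sqrt h1
          _ = ‖m (ν - w)‖ := Real.sqrt_sq (norm_nonneg _)
      have h2 : Real.sqrt (S / (α / 2)) ^ 2 = S / (α / 2) :=
        Real.sq_sqrt (by positivity)
      have h3 : Real.sqrt (S / (α / 2)) ^ 2 ≤ (D w) ^ 2 :=
        pow_le_pow_left₀ (Real.sqrt_nonneg _) hsq 2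
      rw [h2, div_le_iff₀ hc] at h3
      linarith
    · apply le_csInf (hCne.image _)
      rintro x ⟨ν, hν, rfl⟩
      show α / 2 * D w ^ 2 ≤ α / 2 * ‖m (ν - w)‖ ^ 2
      nlinarith [hDle w ν hν, hD0 w, mul_le_mul (hDle w ν hν) (hDle w ν hν) (hD0 w) (norm_nonneg (m (ν - w)))]
  -- rewrite F
  set wa := z₁ + α⁻¹ • lam with hwa
  set wb := z₂ + α⁻¹ • lam with hwb
  have hFd : F z₁ - F z₂ =
      α / 2 * (D wa) ^ 2 - α / 2 * (D wb) ^ 2 - ⟪m (z₁ - z₂), m lam⟫ := by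
    rw [hF z₁, hF z₂, hkey wa, hkey wb, map_sub, inner_sub_left]
    ring
  have hwd : wa - wb = z₁ - z₂ := by
    rw [hwa, hwb]; abel
  set N := ‖m (z₁ - z₂)‖ with hN
  have hNnn : 0 ≤ N := norm_nonneg _
  have habsD : |D wa - D wb| ≤ N := by
    rw [abs_sub_le_iff]
    constructor
    · have := hLip wa wb
      rw [hwd] at this
      linarith
    · have := hLip wb wa
      have he : ‖m (wb - wa)‖ = N := by
        rw [hN, ← hwd, ← neg_sub wa wb, map_neg, norm_neg]
      rw [he] at this
      linarith
  have hbound : ∀ z : EuclideanSpace ℝ (Fin d),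
      ‖m (z + α⁻¹ • lam)‖ ≤ ‖m z‖ + α⁻¹ * ‖m lam‖ := by
    intro z
    have : m (z + α⁻¹ • lam) = m z + α⁻¹ • m lam := by
      rw [map_add, map_smul]
    rw [this]
    calc ‖m z + α⁻¹ • m lam‖ ≤ ‖m z‖ + ‖α⁻¹ • m lam‖ := norm_add_le _ _
      _ = ‖m z‖ + α⁻¹ * ‖m lam‖ := by
          rw [norm_smul, Real.norm_eq_abs, abs_of_pos (by positivity)]
  have hDa : D wa ≤ ‖m z₁‖ + α⁻¹ * ‖m lam‖ := (hDw wa).trans (hbound z₁)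
  have hDb : D wb ≤ ‖m z₂‖ + α⁻¹ * ‖m lam‖ := (hDw wb).trans (hbound z₂)
  have hIP : |⟪m (z₁ - z₂), m lam⟫| ≤ N * ‖m lam‖ := abs_real_inner_le_norm _ _
  have hsum : |D wa + D wb| ≤ ‖m z₁‖ + ‖m z₂‖ + 2 * α⁻¹ * ‖m lam‖ := by
    rw [abs_of_nonneg (by linarith [hD0 wa, hD0 wb])]
    linarith
  have hprod : |D wa - D wb| * |D wa + D wb| ≤
      N * (‖m z₁‖ + ‖m z₂‖ + 2 * α⁻¹ * ‖m lam‖) :=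
    mul_le_mul habsD hsum (abs_nonneg _) hNnn
  have hquad : |α / 2 * (D wa) ^ 2 - α / 2 * (D wb) ^ 2| ≤
      α / 2 * N * (‖m z₁‖ + ‖m z₂‖ + 2 * α⁻¹ * ‖m lam‖) := by
    have he : α / 2 * (D wa) ^ 2 - α / 2 * (D wb) ^ 2 =
        α / 2 * ((D wa - D wb) * (D wa + D wb)) := by ring
    rw [he, abs_mul, abs_mul, abs_of_pos hc]
    nlinarith
  calc |F z₁ - F z₂|
      = |α / 2 * (D wa) ^ 2 - α / 2 * (D wb) ^ 2 - ⟪m (z₁ - z₂), m lam⟫| := by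
        rw [hFd]
    _ ≤ |α / 2 * (D wa) ^ 2 - α / 2 * (D wb) ^ 2| + |⟪m (z₁ - z₂), m lam⟫| :=
        abs_sub _ _
    _ ≤ α / 2 * N * (‖m z₁‖ + ‖m z₂‖ + 2 * α⁻¹ * ‖m lam‖) + N * ‖m lam‖ := by
        linarith
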